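/- Let H and K be real Hilbert spaces and let S be a closed densely defined unbounded operator from H to K. Let Φ : ℝ → H be twice continuously differentiable such that for every t: Φ(t) ∈ D(S) and Φ'(t) ∈ D(S), the map t ↦ S(Φ(t)) is differentiable with derivative S(Φ'(t)), and for all ψ ∈ D(S): ⟨Φ''(t), ψ⟩_H + ⟨S(Φ(t)), Sψ⟩_K = 0. If Φ(0) = 0 and Φ'(0) = 0, then Φ(t) = 0 for all t ≥ 0. -/

import Mathlib

open scoped LinearPMap RealInnerProductSpace

/-- **Uniqueness for the abstract homogeneous wave equation** (strong-solution form of the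
paper's uniqueness theorem).  Let `S` be a closed densely defined unbounded operator from a real
Hilbert space `H` to a real Hilbert space `K`, and `Φ : ℝ → H` a twice continuously
differentiable curve with `Φ(t), Φ'(t) ∈ D(S)`, such that `t ↦ S(Φ(t))` is differentiable with
derivative `S(Φ'(t))` and `⟨Φ''(t), ψ⟩ + ⟨S Φ(t), S ψ⟩ = 0` for all `ψ ∈ D(S)`.  If
`Φ(0) = 0` and `Φ'(0) = 0`, then `Φ(t) = 0` for all `t ≥ 0`. -/
theorem abstract_wave_uniqueness
    {H K : Type*}
    [NormedAddCommGroup H] [InnerProductSpace ℝ H] [CompleteSpace H]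
    [NormedAddCommGroup K] [InnerProductSpace ℝ K] [CompleteSpace K]
    (S : H →ₗ.[ℝ] K)
    (hSdense : Dense (S.domain : Set H))
    (hSclosed : S.IsClosed)
    (Φ : ℝ → H) (hΦ : ContDiff ℝ 2 Φ)
    (hmem : ∀ t, Φ t ∈ S.domain)
    (hmem' : ∀ t, deriv Φ t ∈ S.domain)
    (hSderiv : ∀ t, HasDerivAt (fun s => S ⟨Φ s, hmem s⟩) (S ⟨deriv Φ t, hmem' t⟩) t)
    (heq : ∀ t, ∀ ψ : S.domain,
      ⟪deriv (deriv Φ) t, (ψ : H)⟫ + ⟪S ⟨Φ t, hmem t⟩, S ψ⟫ = 0)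
    (h0 : Φ 0 = 0) (h0' : deriv Φ 0 = 0) :
    ∀ t : ℝ, 0 ≤ t → Φ t = 0 := by
  -- Energy function
  set E : ℝ → ℝ := fun t =>
    ⟪deriv Φ t, deriv Φ t⟫ + ⟪S ⟨Φ t, hmem t⟩, S ⟨Φ t, hmem t⟩⟫ with hE
  have hΦ' : ∀ t, HasDerivAt Φ (deriv Φ t) t := fun t =>
    ((hΦ.differentiable (by norm_num)) t).hasDerivAt
  have hΦ'' : ∀ t, HasDerivAt (deriv Φ) (deriv (deriv Φ) t) t := by
    intro t
    have : Differentiable ℝ (deriv Φ) := by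
      have := (hΦ.iterate_deriv' 1 1).differentiable (by norm_num)
      simpa using this
    exact (this t).hasDerivAt
  have hEderiv : ∀ t, HasDerivAt E 0 t := by
    intro t
    have h1 : HasDerivAt (fun s => ⟪deriv Φ s, deriv Φ s⟫)
        (⟪deriv Φ t, deriv (deriv Φ) t⟫ + ⟪deriv (deriv Φ) t, deriv Φ t⟫) t :=
      (hΦ'' t).inner ℝ (hΦ'' t)
    have h2 : HasDerivAt (fun s => ⟪S ⟨Φ s, hmem s⟩, S ⟨Φ s, hmem s⟩⟫)
        (⟪S ⟨Φ t, hmem t⟩, S ⟨deriv Φ t, hmem' t⟩⟫ +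
          ⟪S ⟨deriv Φ t, hmem' t⟩, S ⟨Φ t, hmem t⟩⟫) t :=
      (hSderiv t).inner ℝ (hSderiv t)
    have key := heq t ⟨deriv Φ t, hmem' t⟩
    have := h1.add h2
    refine (this.congr_deriv ?_ : HasDerivAt E _ t)
    simp only [real_inner_comm (deriv Φ t) (deriv (deriv Φ) t),
      real_inner_comm (S ⟨deriv Φ t, hmem' t⟩) (S ⟨Φ t, hmem t⟩)] at *
    linarith [key]
  have hEconst : ∀ t, E t = E 0 := fun t =>
    is_const_of_deriv_eq_zero (fun t => (hEderiv t).differentiableAt)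
      (fun t => (hEderiv t).deriv) t 0
  have hE0 : E 0 = 0 := by
    have hS0 : S ⟨Φ 0, hmem 0⟩ = 0 := by
      have : (⟨Φ 0, hmem 0⟩ : S.domain) = 0 := by
        ext; simp [h0]
      rw [this]; exact map_zero S.toFun
    simp [hE, h0', hS0]
  have hderiv0 : ∀ t, deriv Φ t = 0 := by
    intro t
    have ht := hEconst t
    rw [hE0] at ht
    have h1 : (0:ℝ) ≤ ⟪deriv Φ t, deriv Φ t⟫ := real_inner_self_nonneg
    have h2 : (0:ℝ) ≤ ⟪S ⟨Φ t, hmem t⟩, S ⟨Φ t, hmem t⟩⟫ := real_inner_self_nonneg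
    have : ⟪deriv Φ t, deriv Φ t⟫ = (0:ℝ) := by
      simp only [hE] at ht; linarith
    exact inner_self_eq_zero.mp this
  intro t _
  have := is_const_of_deriv_eq_zero (hΦ.differentiable (by norm_num))
    (fun s => (hΦ' s).deriv.trans (hderiv0 s)) t 0
  rw [this, h0]
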